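/- Let K ∈ ℝ^{n×n} be symmetric positive semidefinite and let L, B ∈ ℝ^{n×m} satisfy Bᵀ L = I_m and K B = L. Let V ∈ ℝ^{m×m} be orthogonal with V Λ Vᵀ = Lᵀ L for a diagonal matrix Λ, and set Q := B V. Then Qᵀ K Q = I_m and Qᵀ K² Q = Λ; that is, the transformed basis is orthonormal in the RKHS inner product (Gram matrix K) and orthogonal in the empirical L² inner product (Gram matrix K²). -/
import Mathlib


open Matrix

/-- Double-orthogonality of the transformed basis `Q = B V`: `Qᵀ K Q = I`
(orthonormality in the RKHS inner product) and `Qᵀ K² Q = Λ` (orthogonality in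
the empirical L² inner product). -/
theorem double_orthogonal_basis (n m : ℕ)
    (K : Matrix (Fin n) (Fin n) ℝ) (hK : K.PosSemidef)
    (L B : Matrix (Fin n) (Fin m) ℝ)
    (hBL : Bᵀ * L = 1) (hKB : K * B = L)
    (V Lam : Matrix (Fin m) (Fin m) ℝ)
    (hV : Vᵀ * V = 1) (hV' : V * Vᵀ = 1)
    (hLam : Lam.IsDiag) (hspec : V * Lam * Vᵀ = Lᵀ * L) :
    (B * V)ᵀ * K * (B * V) = 1 ∧ (B * V)ᵀ * (K * K) * (B * V) = Lam := by
  have hKs : Kᵀ = K := hK.1.eq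
  have h1 : Bᵀ * K * B = 1 := by
    rw [Matrix.mul_assoc, hKB, hBL]
  have h2 : Bᵀ * (K * K) * B = Lᵀ * L := by
    have : Bᵀ * (K * K) * B = (K * B)ᵀ * (K * B) := by
      rw [Matrix.transpose_mul, hKs]
      simp only [Matrix.mul_assoc]
    rw [this, hKB]
  constructor
  · have : (B * V)ᵀ * K * (B * V) = Vᵀ * (Bᵀ * K * B) * V := by
      rw [Matrix.transpose_mul]
      simp only [Matrix.mul_assoc]
    rw [this, h1, Matrix.mul_one, hV]
  · have e : (B * V)ᵀ * (K * K) * (B * V) = Vᵀ * (Bᵀ * (K * K) * B) * V := by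
      rw [Matrix.transpose_mul]
      simp only [Matrix.mul_assoc]
    rw [e, h2, ← hspec]
    calc Vᵀ * (V * Lam * Vᵀ) * V = (Vᵀ * V) * Lam * (Vᵀ * V) := by
          simp only [Matrix.mul_assoc]
    _ = Lam := by rw [hV, Matrix.one_mul, Matrix.mul_one]
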